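/- Let Z(x) = ∑_{d≥0} (x^d/(λ^d d!)) exp(λ^r((d-1/2)^{r+1} - (-1/2)^{r+1})/(r+1)). Then (λ x d/dx - A) Z = 0, where A = x^{3/2} exp((1/(r+1)) x^{-1}∑_{i=0}^r (λ x d/dx)^i x (λ x d/dx)^{r-i}) x^{-1/2}. -/

import Mathlib

open PowerSeries

/-- The principal specialization of the `r`-spin Hurwitz partition function, as a formal power
series: `Z = ∑_{d ≥ 0} (x^d/(λ^d d!)) exp(λ^r((d-1/2)^{r+1} - (-1/2)^{r+1})/(r+1))`. -/
noncomputable def Zspin (r : ℕ) (l : ℝ) : PowerSeries ℝ :=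
  PowerSeries.mk fun d =>
    1 / (l ^ d * (Nat.factorial d : ℝ)) *
      Real.exp (l ^ r * (((d : ℝ) - 1 / 2) ^ (r + 1) - (-(1 / 2) : ℝ) ^ (r + 1)) / ((r : ℝ) + 1))

/-- The operator `A = x^{3/2} exp((1/(r+1)) x^{-1} ∑_{i=0}^r (λ x d/dx)^i x (λ x d/dx)^{r-i}) x^{-1/2}`,
acting on `x^n` by `A x^n = exp((λ^r/(r+1))((n+1/2)^{r+1} - (n-1/2)^{r+1})) x^{n+1}`. -/
noncomputable def opA (r : ℕ) (l : ℝ) (f : PowerSeries ℝ) : PowerSeries ℝ :=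
  PowerSeries.mk fun n =>
    match n with
    | 0 => 0
    | m + 1 =>
      Real.exp (l ^ r / ((r : ℝ) + 1) *
          (((m : ℝ) + 1 / 2) ^ (r + 1) - ((m : ℝ) - 1 / 2) ^ (r + 1))) *
        PowerSeries.coeff m f

/-- The operator `λ x d/dx`, acting on `x^n` by multiplication by `λn`. -/
noncomputable def xDx (l : ℝ) (f : PowerSeries ℝ) : PowerSeries ℝ :=
  PowerSeries.mk fun n => l * (n : ℝ) * PowerSeries.coeff n f

/-- `(λ x d/dx - A) Z = 0`. -/
theorem r_spin_quantum_curve_annihilates (r : ℕ) (hr : 0 < r) (l : ℝ) (hl : l ≠ 0) :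
    xDx l (Zspin r l) - opA r l (Zspin r l) = 0 := by
  ext n
  rw [map_zero] at *
  rw [map_sub, sub_eq_zero]
  simp only [xDx, opA, Zspin, coeff_mk]
  cases n with
  | zero => simp
  | succ m =>
    have hfac : ((m + 1).factorial : ℝ) = ((m : ℝ) + 1) * (m.factorial : ℝ) := by
      push_cast [Nat.factorial_succ]; ring
    have hfne : (m.factorial : ℝ) ≠ 0 := Nat.cast_ne_zero.mpr m.factorial_ne_zero
    have hm1 : ((m : ℝ) + 1) ≠ 0 := by positivity
    have hlp : l ^ m ≠ 0 := pow_ne_zero _ hl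
    have hexp : Real.exp (l ^ r * ((((m : ℕ) + 1 : ℝ) - 1 / 2) ^ (r + 1) -
        (-(1 / 2) : ℝ) ^ (r + 1)) / ((r : ℝ) + 1)) =
        Real.exp (l ^ r / ((r : ℝ) + 1) *
          (((m : ℝ) + 1 / 2) ^ (r + 1) - ((m : ℝ) - 1 / 2) ^ (r + 1))) *
        Real.exp (l ^ r * (((m : ℝ) - 1 / 2) ^ (r + 1) - (-(1 / 2) : ℝ) ^ (r + 1)) /
          ((r : ℝ) + 1)) := by
      rw [← Real.exp_add]
      congr 1
      have : ((m : ℕ) + 1 : ℝ) - 1 / 2 = (m : ℝ) + 1 / 2 := by push_cast; ring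
      rw [this]; ring
    push_cast
    rw [hexp, hfac]
    field_simp
    ring
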